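/- Let N ≥ 1, let s ∈ (Fin N → ZMod 2) be nonzero, and let z₁, …, z_{N-1} ∈ (Fin N → ZMod 2) be linearly independent vectors satisfying ⟨z_i, s⟩ = 0 for all i. Then the solution set {v ∈ (Fin N → ZMod 2) : ⟨z_i, v⟩ = 0 for all i} is exactly {0, s}; in particular the classical post-processing of Simon's algorithm determines the hidden string s from N−1 independent samples. -/

import Mathlib

/-- Given `N-1` linearly independent vectors over F₂ all orthogonal to a nonzero `s`,
the common solution set of `⟨z_i, v⟩ = 0` is exactly `{0, s}`: the classical
post-processing of Simon's algorithm recovers the hidden string. -/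
theorem simon_postprocessing_solution_set {N : ℕ} (hN : 1 ≤ N)
    (s : Fin N → ZMod 2) (hs : s ≠ 0)
    (z : Fin (N - 1) → (Fin N → ZMod 2))
    (hli : LinearIndependent (ZMod 2) z)
    (hz : ∀ i, ∑ j, z i j * s j = 0) :
    {v : Fin N → ZMod 2 | ∀ i, ∑ j, z i j * v j = 0} = {0, s} := by
  classical
  set M : Matrix (Fin (N - 1)) (Fin N) (ZMod 2) := Matrix.of z with hM
  have hrank : M.rank = N - 1 := by
    rw [Matrix.rank_eq_finrank_span_row]
    have : Set.range M.row = Set.range z := rfl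
    rw [this, finrank_span_eq_card hli]
    simp
  have hkerset : {v : Fin N → ZMod 2 | ∀ i, ∑ j, z i j * v j = 0}
      = (LinearMap.ker M.mulVecLin : Set (Fin N → ZMod 2)) := by
    ext v
    simp only [Set.mem_setOf_eq, SetLike.mem_coe, LinearMap.mem_ker,
      Matrix.mulVecLin_apply, Matrix.mulVec, dotProduct, funext_iff,
      Pi.zero_apply]
    rfl
  have hrn := LinearMap.finrank_range_add_finrank_ker M.mulVecLin
  have hdim : Module.finrank (ZMod 2) (LinearMap.ker M.mulVecLin) = 1 := by
    have h1 : Module.finrank (ZMod 2) (Fin N → ZMod 2) = N := by simp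
    rw [h1] at hrn
    have : M.rank + Module.finrank (ZMod 2) (LinearMap.ker M.mulVecLin) = N := hrn
    omega
  have hsker : s ∈ LinearMap.ker M.mulVecLin := by
    rw [LinearMap.mem_ker]
    ext i
    simpa [Matrix.mulVec, dotProduct, hM] using hz i
  have hspan : Submodule.span (ZMod 2) {s} = LinearMap.ker M.mulVecLin := by
    apply Submodule.eq_of_le_of_finrank_eq
    · rwa [Submodule.span_singleton_le_iff_mem]
    · rw [hdim, finrank_span_singleton hs]
  rw [hkerset, ← hspan]
  ext v
  simp only [SetLike.mem_coe, Submodule.mem_span_singleton, Set.mem_insert_iff,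
    Set.mem_singleton_iff]
  constructor
  · rintro ⟨c, rfl⟩
    fin_cases c
    · exact Or.inl (zero_smul _ _)
    · exact Or.inr (one_smul _ _)
  · rintro (rfl | rfl)
    · exact ⟨0, by simp⟩
    · exact ⟨1, by simp⟩
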